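/- Let Δ be a quasi-forest on [n]. Then the following are equivalent for the chordal graph G_Δ: (a) all minimal vertex covers of G_Δ have the same cardinality (G_Δ is unmixed); (b) [n] is the disjoint union of facets of Δ each of which contains a free vertex. -/

import Mathlib

open Finset

attribute [local instance] Classical.propDecidable

/-- `C` is a vertex cover of the graph `G_Δ`, where `Δ` is the simplicial complex generated
by the facets `F_0,…,F_m` (an edge of `G_Δ` is a pair of distinct vertices lying in a common
facet). -/
def IsVC {n m : ℕ} (F : Fin (m + 1) → Finset (Fin n)) (C : Finset (Fin n)) : Prop :=
  ∀ i j : Fin n, ∀ k : Fin (m + 1), i ≠ j → i ∈ F k → j ∈ F k → i ∈ C ∨ j ∈ C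

/-- `C` is a minimal vertex cover of `G_Δ`. -/
def IsMinVC {n m : ℕ} (F : Fin (m + 1) → Finset (Fin n)) (C : Finset (Fin n)) : Prop :=
  IsVC F C ∧ ∀ C' ⊆ C, IsVC F C' → C' = C

section QF

variable {n : ℕ}

/-- vertex set of the presented complex -/
def qfV {m : ℕ} (F : Fin (m + 1) → Finset (Fin n)) : Finset (Fin n) :=
  Finset.univ.biUnion F

/-- adjacency in the graph of the complex -/
def qfAdj {m : ℕ} (F : Fin (m + 1) → Finset (Fin n)) (x y : Fin n) : Prop :=
  x ≠ y ∧ ∃ k, x ∈ F k ∧ y ∈ F k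

/-- closed neighbourhood -/
noncomputable def qfN {m : ℕ} (F : Fin (m + 1) → Finset (Fin n)) (x : Fin n) : Finset (Fin n) :=
  (qfV F).filter (fun y => y = x ∨ qfAdj F x y)

def qfInd {m : ℕ} (F : Fin (m + 1) → Finset (Fin n)) (A : Finset (Fin n)) : Prop :=
  ∀ x ∈ A, ∀ y ∈ A, ¬ qfAdj F x y

def qfMax {m : ℕ} (F : Fin (m + 1) → Finset (Fin n)) (A : Finset (Fin n)) : Prop :=
  A ⊆ qfV F ∧ qfInd F A ∧ ∀ v ∈ qfV F, v ∉ A → ∃ a ∈ A, qfAdj F a v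

def qfWC {m : ℕ} (F : Fin (m + 1) → Finset (Fin n)) : Prop :=
  ∀ A B, qfMax F A → qfMax F B → A.card = B.card

def qfSimp {m : ℕ} (F : Fin (m + 1) → Finset (Fin n)) (x : Fin n) : Prop :=
  x ∈ qfV F ∧ ∀ p ∈ qfN F x, ∀ q ∈ qfN F x, p ≠ q → qfAdj F p q

def qfPart {m : ℕ} (F : Fin (m + 1) → Finset (Fin n)) (T : Finset (Fin n)) : Prop :=
  (∀ x ∈ T, qfSimp F x) ∧ (∀ x ∈ T, ∀ y ∈ T, x ≠ y → Disjoint (qfN F x) (qfN F y)) ∧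
    ∀ v ∈ qfV F, ∃ x ∈ T, v ∈ qfN F x

def qfLf {m : ℕ} (F : Fin (m + 1) → Finset (Fin n)) : Prop :=
  ∀ i : Fin (m + 1), 0 < (i : ℕ) → ∃ t, t < i ∧ ∀ j, j < i → F j ∩ F i ⊆ F t

/-- restriction of the presentation to a vertex subset -/
def qfR {m : ℕ} (F : Fin (m + 1) → Finset (Fin n)) (S : Finset (Fin n)) :
    Fin (m + 1) → Finset (Fin n) := fun i => F i ∩ S

/-- drop the last facet -/
def qfC {m : ℕ} (F : Fin (m + 2) → Finset (Fin n)) : Fin (m + 1) → Finset (Fin n) :=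
  fun i => F i.castSucc

variable {m : ℕ}

lemma qfAdj.symm {F : Fin (m + 1) → Finset (Fin n)} {x y : Fin n} (h : qfAdj F x y) :
    qfAdj F y x := ⟨h.1.symm, h.2.imp (fun _ hk => ⟨hk.2, hk.1⟩)⟩

lemma qfAdj.ne {F : Fin (m + 1) → Finset (Fin n)} {x y : Fin n} (h : qfAdj F x y) : x ≠ y := h.1

lemma mem_qfV {F : Fin (m + 1) → Finset (Fin n)} {x : Fin n} :
    x ∈ qfV F ↔ ∃ i, x ∈ F i := by
  simp [qfV]

lemma mem_qfV_of_mem {F : Fin (m + 1) → Finset (Fin n)} {x : Fin n} {k : Fin (m + 1)}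
    (h : x ∈ F k) : x ∈ qfV F := mem_qfV.mpr ⟨k, h⟩

lemma qfAdj.mem_qfV_left {F : Fin (m + 1) → Finset (Fin n)} {x y : Fin n} (h : qfAdj F x y) :
    x ∈ qfV F := by obtain ⟨-, k, hk⟩ := h; exact mem_qfV_of_mem hk.1

lemma qfAdj.mem_qfV_right {F : Fin (m + 1) → Finset (Fin n)} {x y : Fin n} (h : qfAdj F x y) :
    y ∈ qfV F := h.symm.mem_qfV_left

lemma mem_qfN {F : Fin (m + 1) → Finset (Fin n)} {x y : Fin n} :
    y ∈ qfN F x ↔ y ∈ qfV F ∧ (y = x ∨ qfAdj F x y) := by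
  simp [qfN]

lemma self_mem_qfN {F : Fin (m + 1) → Finset (Fin n)} {x : Fin n} (h : x ∈ qfV F) :
    x ∈ qfN F x := mem_qfN.mpr ⟨h, Or.inl rfl⟩

lemma qfAdj.mem_qfN {F : Fin (m + 1) → Finset (Fin n)} {x y : Fin n} (h : qfAdj F x y) :
    y ∈ qfN F x := _root_.mem_qfN.mpr ⟨h.mem_qfV_right, Or.inr h⟩

lemma adj_of_mem_qfN {F : Fin (m + 1) → Finset (Fin n)} {x y : Fin n}
    (h : y ∈ qfN F x) (hne : y ≠ x) : qfAdj F x y := by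
  rcases mem_qfN.mp h with ⟨-, h | h⟩
  · exact absurd h hne
  · exact h

lemma qfN_subset_qfV {F : Fin (m + 1) → Finset (Fin n)} {x : Fin n} :
    qfN F x ⊆ qfV F := filter_subset _ _

lemma facet_subset_qfN {F : Fin (m + 1) → Finset (Fin n)} {x : Fin n} {k : Fin (m + 1)}
    (hx : x ∈ F k) : F k ⊆ qfN F x := by
  intro y hy
  rcases eq_or_ne y x with rfl | hne
  · exact self_mem_qfN (mem_qfV_of_mem hy)
  · exact mem_qfN.mpr ⟨mem_qfV_of_mem hy, Or.inr ⟨hne.symm, k, hx, hy⟩⟩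

/- restriction lemmas -/

lemma qfV_qfR {F : Fin (m + 1) → Finset (Fin n)} {S : Finset (Fin n)} :
    qfV (qfR F S) = qfV F ∩ S := by
  ext x; simp [qfV, qfR, mem_inter]

lemma qfAdj_qfR {F : Fin (m + 1) → Finset (Fin n)} {S : Finset (Fin n)} {x y : Fin n} :
    qfAdj (qfR F S) x y ↔ qfAdj F x y ∧ x ∈ S ∧ y ∈ S := by
  constructor
  · rintro ⟨hne, k, hx, hy⟩
    rw [qfR, mem_inter] at hx hy
    exact ⟨⟨hne, k, hx.1, hy.1⟩, hx.2, hy.2⟩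
  · rintro ⟨⟨hne, k, hx, hy⟩, hxS, hyS⟩
    exact ⟨hne, k, by simp [qfR, hx, hy, hxS, hyS]⟩

lemma qfLf_qfR {F : Fin (m + 1) → Finset (Fin n)} {S : Finset (Fin n)} (h : qfLf F) :
    qfLf (qfR F S) := by
  intro i hi
  obtain ⟨t, ht, hsub⟩ := h i hi
  refine ⟨t, ht, fun j hj => ?_⟩
  intro x hx
  simp only [qfR, mem_inter] at hx ⊢
  exact ⟨hsub j hj (mem_inter.mpr ⟨hx.1.1, hx.2.1⟩), hx.1.2⟩

/- drop-last lemmas -/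

lemma qfLf_qfC {F : Fin (m + 2) → Finset (Fin n)} (h : qfLf F) : qfLf (qfC F) := by
  intro i hi
  obtain ⟨t, ht, hsub⟩ := h i.castSucc (by simpa using hi)
  have htv : (t : ℕ) < m + 1 := by
    have h1 : (t : ℕ) < (i.castSucc : ℕ) := ht
    have h2 : (i.castSucc : ℕ) < m + 2 := i.castSucc.isLt
    have h3 : (i : ℕ) < m + 1 := i.isLt
    simp only [Fin.coe_castSucc] at h1
    omega
  refine ⟨⟨(t : ℕ), htv⟩, ?_, fun j hj => ?_⟩
  · show ((⟨(t : ℕ), htv⟩ : Fin (m+1)) : ℕ) < (i : ℕ)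
    have h1 : (t : ℕ) < (i.castSucc : ℕ) := ht
    simpa using h1
  · have hceq : Fin.castSucc ⟨(t : ℕ), htv⟩ = t := Fin.ext (by simp)
    have hjlt : j.castSucc < i.castSucc := by
      rw [Fin.castSucc_lt_castSucc_iff]; exact hj
    have := hsub j.castSucc hjlt
    simpa [qfC, hceq] using this

lemma lt_last_of_ne {j : Fin (m + 2)} (h : j ≠ Fin.last (m + 1)) : j < Fin.last (m + 1) := by
  rcases lt_or_eq_of_le (Fin.le_last j) with h' | h'
  · exact h'
  · exact absurd h' h

/-- a vertex of the last facet not in the branch facet lies in no other facet -/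
lemma qf_keyW {F : Fin (m + 2) → Finset (Fin n)} {t : Fin (m + 2)}
    (hsub : ∀ j, j < Fin.last (m + 1) → F j ∩ F (Fin.last (m + 1)) ⊆ F t)
    {x : Fin n} (hx : x ∈ F (Fin.last (m + 1))) (hxt : x ∉ F t) :
    ∀ j, j ≠ Fin.last (m + 1) → x ∉ F j := by
  intro j hj hxj
  exact hxt (hsub j (lt_last_of_ne hj) (mem_inter.mpr ⟨hxj, hx⟩))

lemma qfAdj_qfC_of {F : Fin (m + 2) → Finset (Fin n)} {t : Fin (m + 2)}
    (ht : t < Fin.last (m + 1)) {x y : Fin n}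
    (hx : x ∈ F (Fin.last (m + 1)) → x ∈ F t) (hy : y ∈ F (Fin.last (m + 1)) → y ∈ F t)
    (h : qfAdj F x y) : qfAdj (qfC F) x y := by
  obtain ⟨hne, k, hxk, hyk⟩ := h
  rcases eq_or_ne k (Fin.last (m + 1)) with rfl | hk
  · have htv : (t : ℕ) < m + 1 := by simpa [Fin.lt_def] using ht
    refine ⟨hne, ⟨t, htv⟩, ?_, ?_⟩ <;>
      · show _ ∈ F (Fin.castSucc ⟨(t : ℕ), htv⟩)
        rw [show Fin.castSucc ⟨(t : ℕ), htv⟩ = t from Fin.ext (by simp)]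
        first | exact hx hxk | exact hy hyk
  · have hkv : (k : ℕ) < m + 1 := by simpa [Fin.lt_def] using lt_last_of_ne hk
    refine ⟨hne, ⟨k, hkv⟩, ?_, ?_⟩ <;>
      · show _ ∈ F (Fin.castSucc ⟨(k : ℕ), hkv⟩)
        rw [show Fin.castSucc ⟨(k : ℕ), hkv⟩ = k from Fin.ext (by simp)]
        assumption

lemma qfAdj_of_qfC {F : Fin (m + 2) → Finset (Fin n)} {x y : Fin n}
    (h : qfAdj (qfC F) x y) : qfAdj F x y := by
  obtain ⟨hne, k, hxk, hyk⟩ := h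
  exact ⟨hne, k.castSucc, hxk, hyk⟩

end QF
section QF2

variable {n : ℕ}

lemma qfV_qfC_of_sub {m : ℕ} {F : Fin (m + 2) → Finset (Fin n)} {t : Fin (m + 2)}
    (ht : t < Fin.last (m + 1)) (hsub : F (Fin.last (m + 1)) ⊆ F t) :
    qfV (qfC F) = qfV F := by
  apply Finset.Subset.antisymm
  · intro x hx
    obtain ⟨i, hi⟩ := mem_qfV.mp hx
    exact mem_qfV_of_mem (hi : x ∈ F i.castSucc)
  · intro x hx
    obtain ⟨i, hi⟩ := mem_qfV.mp hx
    rcases eq_or_ne i (Fin.last (m + 1)) with rfl | hne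
    · have hxt : x ∈ F t := hsub hi
      have htv : (t : ℕ) < m + 1 := by simpa [Fin.lt_def] using ht
      have : x ∈ qfC F ⟨(t : ℕ), htv⟩ := by
        show x ∈ F (Fin.castSucc ⟨(t : ℕ), htv⟩)
        rwa [show Fin.castSucc ⟨(t : ℕ), htv⟩ = t from Fin.ext (by simp)]
      exact mem_qfV_of_mem this
    · have hiv : (i : ℕ) < m + 1 := by simpa [Fin.lt_def] using lt_last_of_ne hne
      have : x ∈ qfC F ⟨(i : ℕ), hiv⟩ := by
        show x ∈ F (Fin.castSucc ⟨(i : ℕ), hiv⟩)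
        rwa [show Fin.castSucc ⟨(i : ℕ), hiv⟩ = i from Fin.ext (by simp)]
      exact mem_qfV_of_mem this

lemma qfAdj_qfC_iff_of_sub {m : ℕ} {F : Fin (m + 2) → Finset (Fin n)} {t : Fin (m + 2)}
    (ht : t < Fin.last (m + 1)) (hsub : F (Fin.last (m + 1)) ⊆ F t) {x y : Fin n} :
    qfAdj (qfC F) x y ↔ qfAdj F x y :=
  ⟨qfAdj_of_qfC, qfAdj_qfC_of ht (fun h => hsub h) (fun h => hsub h)⟩

/-- L2: every nonempty presented complex with a leaf order has a simplicial vertex -/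
lemma qf_exists_simp : ∀ {m : ℕ} (F : Fin (m + 1) → Finset (Fin n)),
    qfLf F → (qfV F).Nonempty → ∃ x, qfSimp F x := by
  intro m
  induction m with
  | zero =>
    intro F _ hne
    obtain ⟨x, hx⟩ := hne
    have hall : ∀ y ∈ qfV F, y ∈ F 0 := by
      intro y hy
      obtain ⟨i, hi⟩ := mem_qfV.mp hy
      rwa [Subsingleton.elim (0 : Fin 1) i]
    refine ⟨x, hx, fun p hp q hq hpq => ?_⟩
    exact ⟨hpq, 0, hall p (qfN_subset_qfV hp), hall q (qfN_subset_qfV hq)⟩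
  | succ m ih =>
    intro F hl hne
    obtain ⟨t, ht, hsub⟩ := hl (Fin.last (m + 1)) (by simp)
    by_cases hW : ∃ x, x ∈ F (Fin.last (m + 1)) ∧ x ∉ F t
    · obtain ⟨x, hxl, hxt⟩ := hW
      have key := qf_keyW hsub hxl hxt
      have hNsub : qfN F x ⊆ F (Fin.last (m + 1)) := by
        intro y hy
        rcases mem_qfN.mp hy with ⟨-, rfl | hadj⟩
        · exact hxl
        · obtain ⟨-, k, hxk, hyk⟩ := hadj
          rcases eq_or_ne k (Fin.last (m + 1)) with rfl | hk
          · exact hyk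
          · exact absurd hxk (key k hk)
      exact ⟨x, mem_qfV_of_mem hxl, fun p hp q hq hpq =>
        ⟨hpq, Fin.last (m + 1), hNsub hp, hNsub hq⟩⟩
    · push_neg at hW
      have hV : qfV (qfC F) = qfV F := qfV_qfC_of_sub ht hW
      obtain ⟨x, hxV, hxS⟩ := ih (qfC F) (qfLf_qfC hl) (by rw [hV]; exact hne)
      have hNeq : qfN (qfC F) x = qfN F x := by
        ext y
        simp only [mem_qfN, hV, qfAdj_qfC_iff_of_sub ht hW]
      refine ⟨x, by rwa [hV] at hxV, fun p hp q hq hpq => ?_⟩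
      rw [← hNeq] at hp hq
      exact qfAdj_of_qfC (hxS p hp q hq hpq)

/-- L1: flag property: every clique is contained in a facet -/
lemma qf_flag : ∀ {m : ℕ} (F : Fin (m + 1) → Finset (Fin n)),
    qfLf F → ∀ Q : Finset (Fin n), Q ⊆ qfV F →
    (∀ p ∈ Q, ∀ q ∈ Q, p ≠ q → qfAdj F p q) → ∃ k, Q ⊆ F k := by
  intro m
  induction m with
  | zero =>
    intro F _ Q hQV _
    refine ⟨0, fun q hq => ?_⟩
    obtain ⟨i, hi⟩ := mem_qfV.mp (hQV hq)
    rwa [Subsingleton.elim (0 : Fin 1) i]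
  | succ m ih =>
    intro F hl Q hQV hQ
    obtain ⟨t, ht, hsub⟩ := hl (Fin.last (m + 1)) (by simp)
    by_cases hx : ∃ x ∈ Q, x ∈ F (Fin.last (m + 1)) ∧ x ∉ F t
    · obtain ⟨x, hxQ, hxl, hxt⟩ := hx
      have key := qf_keyW hsub hxl hxt
      refine ⟨Fin.last (m + 1), fun y hy => ?_⟩
      rcases eq_or_ne y x with rfl | hne
      · exact hxl
      · obtain ⟨-, k, hxk, hyk⟩ := hQ x hxQ y hy hne.symm
        rcases eq_or_ne k (Fin.last (m + 1)) with rfl | hk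
        · exact hyk
        · exact absurd hxk (key k hk)
    · push_neg at hx
      have hQV' : Q ⊆ qfV (qfC F) := by
        intro q hq
        obtain ⟨i, hi⟩ := mem_qfV.mp (hQV hq)
        rcases eq_or_ne i (Fin.last (m + 1)) with rfl | hne
        · have hqt : q ∈ F t := hx q hq hi
          have htv : (t : ℕ) < m + 1 := by simpa [Fin.lt_def] using ht
          refine mem_qfV_of_mem (k := ⟨(t : ℕ), htv⟩) ?_
          show q ∈ F (Fin.castSucc ⟨(t : ℕ), htv⟩)
          rwa [show Fin.castSucc ⟨(t : ℕ), htv⟩ = t from Fin.ext (by simp)]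
        · have hiv : (i : ℕ) < m + 1 := by simpa [Fin.lt_def] using lt_last_of_ne hne
          refine mem_qfV_of_mem (k := ⟨(i : ℕ), hiv⟩) ?_
          show q ∈ F (Fin.castSucc ⟨(i : ℕ), hiv⟩)
          rwa [show Fin.castSucc ⟨(i : ℕ), hiv⟩ = i from Fin.ext (by simp)]
      have hQ' : ∀ p ∈ Q, ∀ q ∈ Q, p ≠ q → qfAdj (qfC F) p q := by
        intro p hp q hq hpq
        exact qfAdj_qfC_of ht (hx p hp) (hx q hq) (hQ p hp q hq hpq)
      obtain ⟨k, hk⟩ := ih (qfC F) (qfLf_qfC hl) Q hQV' hQ'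
      exact ⟨k.castSucc, hk⟩

/-- L3: no induced 4-cycles -/
lemma qf_noC4 : ∀ {m : ℕ} (F : Fin (m + 1) → Finset (Fin n)), qfLf F →
    ∀ a b c d : Fin n, qfAdj F a b → qfAdj F b c → qfAdj F c d → qfAdj F d a →
    a ≠ c → b ≠ d → ¬ qfAdj F a c → ¬ qfAdj F b d → False := by
  intro m
  induction m with
  | zero =>
    intro F _ a b c d hab hbc hcd hda hac hbd hnac _
    have h0 : ∀ x y : Fin n, qfAdj F x y → x ∈ F 0 ∧ y ∈ F 0 := by
      rintro x y ⟨-, k, hx, hy⟩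
      have hk : k = 0 := Fin.ext (by omega)
      rw [hk] at hx hy
      exact ⟨hx, hy⟩
    exact hnac ⟨hac, 0, (h0 a b hab).1, (h0 b c hbc).2⟩
  | succ m ih =>
    intro F hl a b c d hab hbc hcd hda hac hbd hnac hnbd
    obtain ⟨t, ht, hsub⟩ := hl (Fin.last (m + 1)) (by simp)
    set L := Fin.last (m + 1) with hL
    have memlast : ∀ x y : Fin n, (x ∈ F L ∧ x ∉ F t) → qfAdj F x y → y ∈ F L := by
      rintro x y ⟨hxl, hxt⟩ ⟨-, k, hxk, hyk⟩
      rcases eq_or_ne k L with rfl | hk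
      · exact hyk
      · exact absurd hxk (qf_keyW hsub hxl hxt k hk)
    by_cases ha : a ∈ F L ∧ a ∉ F t
    · exact hnbd ⟨hbd, L, memlast a b ha hab, memlast a d ha hda.symm⟩
    by_cases hb : b ∈ F L ∧ b ∉ F t
    · exact hnac ⟨hac, L, memlast b a hb hab.symm, memlast b c hb hbc⟩
    by_cases hc : c ∈ F L ∧ c ∉ F t
    · exact hnbd ⟨hbd, L, memlast c b hc hbc.symm, memlast c d hc hcd⟩
    by_cases hd : d ∈ F L ∧ d ∉ F t
    · exact hnac ⟨hac, L, memlast d a hd hda, memlast d c hd hcd.symm⟩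
    · have himp : ∀ x : Fin n, ¬(x ∈ F L ∧ x ∉ F t) → (x ∈ F L → x ∈ F t) := by
        intro x hx hxl
        by_contra hxt
        exact hx ⟨hxl, hxt⟩
      exact ih (qfC F) (qfLf_qfC hl) a b c d
        (qfAdj_qfC_of ht (himp a ha) (himp b hb) hab)
        (qfAdj_qfC_of ht (himp b hb) (himp c hc) hbc)
        (qfAdj_qfC_of ht (himp c hc) (himp d hd) hcd)
        (qfAdj_qfC_of ht (himp d hd) (himp a ha) hda)
        hac hbd (fun h => hnac (qfAdj_of_qfC h)) (fun h => hnbd (qfAdj_of_qfC h))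

end QF2
section QF3

variable {n m : ℕ}

/-- M1: extend an independent set to a maximal one -/
lemma qf_extend {F : Fin (m + 1) → Finset (Fin n)} {A₀ : Finset (Fin n)}
    (h0 : qfInd F A₀) (hsub : A₀ ⊆ qfV F) : ∃ A, A₀ ⊆ A ∧ qfMax F A := by
  classical
  set 𝒜 : Finset (Finset (Fin n)) :=
    (qfV F).powerset.filter (fun A => A₀ ⊆ A ∧ qfInd F A) with h𝒜
  have hmem : ∀ {A}, A ∈ 𝒜 ↔ (A ⊆ qfV F ∧ (A₀ ⊆ A ∧ qfInd F A)) := by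
    intro A; simp [h𝒜, Finset.mem_filter, Finset.mem_powerset]
  have hne : 𝒜.Nonempty := ⟨A₀, hmem.mpr ⟨hsub, Finset.Subset.refl _, h0⟩⟩
  obtain ⟨A, hA, hmax⟩ := 𝒜.exists_max_image Finset.card hne
  obtain ⟨hAV, hA₀A, hAind⟩ := hmem.mp hA
  refine ⟨A, hA₀A, hAV, hAind, fun v hv hvA => ?_⟩
  by_contra hno
  push_neg at hno
  have hins : insert v A ∈ 𝒜 := by
    refine hmem.mpr ⟨Finset.insert_subset hv hAV, hA₀A.trans (Finset.subset_insert _ _), ?_⟩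
    intro x hx y hy hadj
    rcases Finset.mem_insert.mp hx with hx1 | hx2
    · subst hx1
      rcases Finset.mem_insert.mp hy with hy1 | hy2
      · subst hy1; exact hadj.ne rfl
      · exact hno y hy2 hadj.symm
    · rcases Finset.mem_insert.mp hy with hy1 | hy2
      · subst hy1; exact hno x hx2 hadj
      · exact hAind x hx2 y hy2 hadj
  have := hmax _ hins
  rw [Finset.card_insert_of_notMem hvA] at this
  omega

/-- SC0: adjacent simplicial vertices have equal closed neighbourhoods -/
lemma qf_sc0 {F : Fin (m + 1) → Finset (Fin n)} {x y : Fin n}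
    (hx : qfSimp F x) (hy : qfSimp F y) (hadj : qfAdj F x y) : qfN F x = qfN F y := by
  have key : ∀ {u v : Fin n}, qfSimp F u → qfSimp F v → qfAdj F u v →
      qfN F u ⊆ qfN F v := by
    intro u v hu hv huv z hz
    rcases eq_or_ne z v with rfl | hzv
    · exact self_mem_qfN huv.mem_qfV_right
    · rcases eq_or_ne z u with rfl | hzu
      · exact huv.symm.mem_qfN
      · have hvN : v ∈ qfN F u := huv.mem_qfN
        have : qfAdj F v z := hu.2 v hvN z hz hzv.symm
        exact this.mem_qfN
  exact Finset.Subset.antisymm (key hx hy hadj) (key hy hx hadj.symm)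

/-- SC1: in a well-covered graph, distinct simplicial cliques are disjoint -/
lemma qf_sc1 {F : Fin (m + 1) → Finset (Fin n)} (hw : qfWC F) {x y : Fin n}
    (hx : qfSimp F x) (hy : qfSimp F y) (hne : qfN F x ≠ qfN F y) :
    Disjoint (qfN F x) (qfN F y) := by
  rw [Finset.disjoint_left]
  intro v hvx hvy
  by_contra
  have hxy : x ≠ y := fun h => hne (by rw [h])
  have hnadj : ¬ qfAdj F x y := fun h => hne (qf_sc0 hx hy h)
  have hvnex : v ≠ x := by
    rintro rfl
    exact hnadj (adj_of_mem_qfN hvy hxy).symm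
  have hvney : v ≠ y := by
    rintro rfl
    exact hnadj (adj_of_mem_qfN hvx hxy.symm)
  obtain ⟨A, hvA, hAmax⟩ := qf_extend (A₀ := {v})
    (by intro a ha b hb hadj
        simp only [Finset.mem_singleton] at ha hb
        subst ha; subst hb; exact hadj.ne rfl)
    (by simpa using qfN_subset_qfV hvx)
  have hvA' : v ∈ A := hvA (Finset.mem_singleton_self v)
  have honly : ∀ w ∈ A, w ≠ v → w ∉ qfN F x ∧ w ∉ qfN F y := by
    intro w hw hwv
    constructor
    · intro hwN
      exact hAmax.2.1 w hw v hvA' (hx.2 w hwN v hvx hwv)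
    · intro hwN
      exact hAmax.2.1 w hw v hvA' (hy.2 w hwN v hvy hwv)
  set B := insert x (insert y (A.erase v)) with hB
  have hxA : x ∉ A.erase v := by
    intro h
    exact (honly x (Finset.mem_of_mem_erase h) (Finset.ne_of_mem_erase h)).1
      (self_mem_qfN hx.1)
  have hyA : y ∉ A.erase v := by
    intro h
    exact (honly y (Finset.mem_of_mem_erase h) (Finset.ne_of_mem_erase h)).2
      (self_mem_qfN hy.1)
  have hBind : qfInd F B := by
    intro p hp q hq hadj
    have hcases : ∀ w, w ∈ B → w = x ∨ w = y ∨ (w ∈ A ∧ w ≠ v) := by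
      intro w hw
      rcases Finset.mem_insert.mp hw with rfl | hw
      · exact Or.inl rfl
      rcases Finset.mem_insert.mp hw with rfl | hw
      · exact Or.inr (Or.inl rfl)
      · exact Or.inr (Or.inr ⟨Finset.mem_of_mem_erase hw, Finset.ne_of_mem_erase hw⟩)
    rcases hcases p hp with rfl | rfl | ⟨hpA, hpv⟩ <;>
      rcases hcases q hq with rfl | rfl | ⟨hqA, hqv⟩
    · exact hadj.ne rfl
    · exact hnadj hadj
    · exact (honly q hqA hqv).1 hadj.mem_qfN
    · exact hnadj hadj.symm
    · exact hadj.ne rfl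
    · exact (honly q hqA hqv).2 hadj.mem_qfN
    · exact (honly p hpA hpv).1 hadj.symm.mem_qfN
    · exact (honly p hpA hpv).2 hadj.symm.mem_qfN
    · exact hAmax.2.1 p hpA q hqA hadj
  have hBV : B ⊆ qfV F := by
    intro w hw
    rcases Finset.mem_insert.mp hw with rfl | hw
    · exact hx.1
    rcases Finset.mem_insert.mp hw with rfl | hw
    · exact hy.1
    · exact hAmax.1 (Finset.mem_of_mem_erase hw)
  obtain ⟨A₂, hBA₂, hA₂max⟩ := qf_extend hBind hBV
  have hcardB : A.card + 1 ≤ B.card := by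
    have h1 : (A.erase v).card = A.card - 1 := Finset.card_erase_of_mem hvA'
    have h2 : x ∉ insert y (A.erase v) := by
      simp only [Finset.mem_insert]
      rintro (rfl | h)
      · exact hxy rfl
      · exact hxA h
    have hApos : 0 < A.card := Finset.card_pos.mpr ⟨v, hvA'⟩
    rw [hB, Finset.card_insert_of_notMem h2, Finset.card_insert_of_notMem hyA, h1]
    omega
  have := hw A A₂ hAmax hA₂max
  have := Finset.card_le_card hBA₂
  omega

/-- L⇐: given a simplicial partition, every maximal independent set has `T.card` elements -/
lemma qf_part_card {F : Fin (m + 1) → Finset (Fin n)} {T A : Finset (Fin n)}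
    (hP : qfPart F T) (hA : qfMax F A) : A.card = T.card := by
  classical
  obtain ⟨hsimp, hdisj, hcov⟩ := hP
  have hone : ∀ x ∈ T, (A ∩ qfN F x).card = 1 := by
    intro x hxT
    have hxV : x ∈ qfV F := (hsimp x hxT).1
    have hne : (A ∩ qfN F x).Nonempty := by
      by_cases hxA : x ∈ A
      · exact ⟨x, Finset.mem_inter.mpr ⟨hxA, self_mem_qfN hxV⟩⟩
      · obtain ⟨a, haA, hadj⟩ := hA.2.2 x hxV hxA
        exact ⟨a, Finset.mem_inter.mpr ⟨haA, hadj.symm.mem_qfN⟩⟩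
    have hle : (A ∩ qfN F x).card ≤ 1 := by
      rw [Finset.card_le_one]
      intro p hp q hq
      by_contra hpq
      obtain ⟨hpA, hpN⟩ := Finset.mem_inter.mp hp
      obtain ⟨hqA, hqN⟩ := Finset.mem_inter.mp hq
      exact hA.2.1 p hpA q hqA ((hsimp x hxT).2 p hpN q hqN hpq)
    have := Finset.card_pos.mpr hne
    omega
  have hAeq : A = T.biUnion (fun x => A ∩ qfN F x) := by
    apply Finset.Subset.antisymm
    · intro a ha
      obtain ⟨x, hxT, haN⟩ := hcov a (hA.1 ha)
      exact Finset.mem_biUnion.mpr ⟨x, hxT, Finset.mem_inter.mpr ⟨ha, haN⟩⟩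
    · intro a ha
      obtain ⟨x, -, haN⟩ := Finset.mem_biUnion.mp ha
      exact (Finset.mem_inter.mp haN).1
  rw [hAeq, Finset.card_biUnion]
  · rw [Finset.sum_congr rfl hone]
    simp
  · intro x hx y hy hxy
    have hd := hdisj x hx y hy hxy
    rw [Function.onFun, Finset.disjoint_left]
    intro a ha1 ha2
    exact (Finset.disjoint_left.mp hd) (Finset.mem_inter.mp ha1).2
      (Finset.mem_inter.mp ha2).2

end QF3
section QF4

variable {n : ℕ}

lemma qfAdj_of_qfR {m : ℕ} {F : Fin (m + 1) → Finset (Fin n)} {S : Finset (Fin n)}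
    {x y : Fin n} (h : qfAdj (qfR F S) x y) : qfAdj F x y := (qfAdj_qfR.mp h).1

lemma qfV_qfR_of_subset {m : ℕ} {F : Fin (m + 1) → Finset (Fin n)} {S : Finset (Fin n)}
    (h : S ⊆ qfV F) : qfV (qfR F S) = S := by
  rw [qfV_qfR, Finset.inter_eq_right.mpr h]

/-- Claim D: in a chordal (presented) graph, a clique all of whose vertices have neighbours
outside the clique can be dominated from outside by an independent set. -/
lemma qf_claimD : ∀ (N : ℕ) {m : ℕ} (F : Fin (m + 1) → Finset (Fin n))
    (K : Finset (Fin n)), (qfV F).card ≤ N → qfLf F → K ⊆ qfV F →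
    (∀ p ∈ K, ∀ q ∈ K, p ≠ q → qfAdj F p q) →
    (∀ w ∈ K, ∃ p, p ∈ qfV F ∧ p ∉ K ∧ qfAdj F p w) →
    ∃ I : Finset (Fin n), I ⊆ qfV F ∧ (∀ i ∈ I, i ∉ K) ∧ qfInd F I ∧
      ∀ w ∈ K, ∃ a ∈ I, qfAdj F a w := by
  intro N
  induction N with
  | zero =>
    intro m F K hc _ hKV _ _
    have hV : qfV F = ∅ := Finset.card_eq_zero.mp (Nat.le_zero.mp hc)
    have hK : K = ∅ := Finset.subset_empty.mp (hV ▸ hKV)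
    exact ⟨∅, by simp, by simp, by intro x hx; simp at hx, by simp [hK]⟩
  | succ N ih =>
    intro m F K hc hl hKV hKclq hout
    rcases Finset.eq_empty_or_nonempty K with rfl | hKne
    · exact ⟨∅, by simp, by simp, by intro x hx; simp at hx, by simp⟩
    have hVne : (qfV F).Nonempty := ⟨hKne.choose, hKV hKne.choose_spec⟩
    obtain ⟨z, hzS⟩ := qf_exists_simp F hl hVne
    have hzV : z ∈ qfV F := hzS.1
    by_cases hzK : z ∈ K
    · -- the simplicial vertex is in K : its outside neighbour dominates all of K
      obtain ⟨u, huV, huK, huadj⟩ := hout z hzK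
      refine ⟨{u}, by simpa using huV, by simpa using huK,
        ?_, fun w hwK => ⟨u, Finset.mem_singleton_self u, ?_⟩⟩
      · intro a ha b hb hadj
        simp only [Finset.mem_singleton] at ha hb
        subst ha; subst hb; exact hadj.ne rfl
      · rcases eq_or_ne w z with rfl | hwz
        · exact huadj
        · have huN : u ∈ qfN F z := huadj.symm.mem_qfN
          have hwN : w ∈ qfN F z := (hKclq z hzK w hwK hwz.symm).mem_qfN
          have hune : u ≠ w := fun h => huK (h ▸ hwK)
          exact hzS.2 u huN w hwN hune
    · by_cases hb1 : ∀ w ∈ K, ∃ p, p ∈ qfV F ∧ p ∉ K ∧ p ≠ z ∧ qfAdj F p w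
      · -- delete z
        set S := (qfV F).erase z with hS
        have hSV : S ⊆ qfV F := Finset.erase_subset _ _
        set F' := qfR F S with hF'
        have hVF' : qfV F' = S := qfV_qfR_of_subset hSV
        have hcard : (qfV F').card ≤ N := by
          rw [hVF', hS, Finset.card_erase_of_mem hzV]
          have : 1 ≤ (qfV F).card := Finset.card_pos.mpr hVne
          omega
        have hKS : K ⊆ S := fun w hw =>
          Finset.mem_erase.mpr ⟨fun h => hzK (h ▸ hw), hKV hw⟩
        obtain ⟨I, hIV, hIK, hIind, hIdom⟩ := ih F' K hcard (qfLf_qfR hl)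
          (by rw [hVF']; exact hKS)
          (fun p hp q hq hpq => qfAdj_qfR.mpr ⟨hKclq p hp q hq hpq, hKS hp, hKS hq⟩)
          (by
            intro w hw
            obtain ⟨p, hpV, hpK, hpz, hpadj⟩ := hb1 w hw
            exact ⟨p, by rw [hVF']; exact Finset.mem_erase.mpr ⟨hpz, hpV⟩, hpK,
              qfAdj_qfR.mpr ⟨hpadj, Finset.mem_erase.mpr ⟨hpz, hpV⟩, hKS hw⟩⟩)
        refine ⟨I, fun i hi => hSV (hVF' ▸ hIV hi), hIK, ?_, fun w hw => ?_⟩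
        · intro a ha b hb hadj
          have haS : a ∈ S := hVF' ▸ hIV ha
          have hbS : b ∈ S := hVF' ▸ hIV hb
          exact hIind a ha b hb (qfAdj_qfR.mpr ⟨hadj, haS, hbS⟩)
        · obtain ⟨a, haI, hadj⟩ := hIdom w hw
          exact ⟨a, haI, qfAdj_of_qfR hadj⟩
      · -- some w₀'s unique outside neighbour is z : delete N[z]
        push_neg at hb1
        obtain ⟨w₀, hw₀K, hw₀only⟩ := hb1
        obtain ⟨p₀, hp₀V, hp₀K, hp₀adj⟩ := hout w₀ hw₀K
        have hp₀z : p₀ = z := by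
          by_contra hne
          exact hw₀only p₀ hp₀V hp₀K hne hp₀adj
        subst hp₀z
        have hzw₀ : qfAdj F p₀ w₀ := hp₀adj
        set S := qfV F \ qfN F p₀ with hS
        have hSV : S ⊆ qfV F := Finset.sdiff_subset
        have hzNS : p₀ ∉ S := fun h => (Finset.mem_sdiff.mp h).2 (self_mem_qfN hzV)
        set F'' := qfR F S with hF''
        have hVF'' : qfV F'' = S := qfV_qfR_of_subset hSV
        have hcard : (qfV F'').card ≤ N := by
          rw [hVF'']
          have : S ⊂ qfV F := Finset.ssubset_iff_of_subset hSV |>.mpr ⟨p₀, hzV, hzNS⟩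
          have := Finset.card_lt_card this
          omega
        set K'' := K ∩ S with hK''
        by_cases hK''e : K'' = ∅
        · refine ⟨{p₀}, by simpa using hzV, by simpa using hzK, ?_, fun w hw => ?_⟩
          · intro a ha b hb hadj
            simp only [Finset.mem_singleton] at ha hb
            subst ha; subst hb; exact hadj.ne rfl
          · have hwS : w ∉ S := by
              intro h
              have : w ∈ K'' := Finset.mem_inter.mpr ⟨hw, h⟩
              rw [hK''e] at this; exact absurd this (Finset.notMem_empty w)
            have hwN : w ∈ qfN F p₀ := by
              by_contra hcon
              exact hwS (Finset.mem_sdiff.mpr ⟨hKV hw, hcon⟩)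
            have hwz : w ≠ p₀ := fun h => hzK (h ▸ hw)
            exact ⟨p₀, Finset.mem_singleton_self p₀, adj_of_mem_qfN hwN hwz⟩
        · -- recursive case
          have hKS'' : K'' ⊆ S := Finset.inter_subset_right
          have houter : ∀ w ∈ K'', ∃ p, p ∈ qfV F'' ∧ p ∉ K'' ∧ qfAdj F'' p w := by
            intro w hw
            obtain ⟨hwK, hwS⟩ := Finset.mem_inter.mp hw
            obtain ⟨p, hpV, hpK, hpadj⟩ := hout w hwK
            by_cases hpS : p ∈ S
            · exact ⟨p, by rw [hVF'']; exact hpS,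
                fun h => hpK (Finset.mem_inter.mp h).1,
                qfAdj_qfR.mpr ⟨hpadj, hpS, hwS⟩⟩
            · exfalso
              have hpN : p ∈ qfN F p₀ := by
                by_contra hcon
                exact hpS (Finset.mem_sdiff.mpr ⟨hpV, hcon⟩)
              have hpz : p ≠ p₀ := by
                rintro rfl
                exact (Finset.mem_sdiff.mp hwS).2 hpadj.mem_qfN
              have hzp : qfAdj F p₀ p := adj_of_mem_qfN hpN hpz
              have hww₀ : w ≠ w₀ := by
                rintro rfl
                exact (Finset.mem_sdiff.mp hwS).2 hzw₀.mem_qfN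
              have hww₀adj : qfAdj F w w₀ := hKclq w hwK w₀ hw₀K hww₀
              have hnw₀p : ¬ qfAdj F w₀ p := fun h =>
                hw₀only p hpV hpK hpz h.symm
              have hnzw : ¬ qfAdj F p₀ w := fun h =>
                (Finset.mem_sdiff.mp hwS).2 h.mem_qfN
              have hw₀p : w₀ ≠ p := fun h => hpK (h ▸ hw₀K)
              have hzw : p₀ ≠ w := fun h => hzK (h ▸ hwK)
              exact qf_noC4 F hl w₀ p₀ p w hzw₀.symm hzp hpadj hww₀adj
                hw₀p hzw hnw₀p hnzw
          obtain ⟨I'', hIV'', hIK'', hIind'', hIdom''⟩ := ih F'' K'' hcard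
            (qfLf_qfR hl) (by rw [hVF'']; exact hKS'')
            (fun p hp q hq hpq => qfAdj_qfR.mpr
              ⟨hKclq p (Finset.mem_inter.mp hp).1 q (Finset.mem_inter.mp hq).1 hpq,
                hKS'' hp, hKS'' hq⟩)
            houter
          have hI''S : ∀ i ∈ I'', i ∈ S := fun i hi => hVF'' ▸ hIV'' hi
          refine ⟨insert p₀ I'', ?_, ?_, ?_, ?_⟩
          · intro i hi
            rcases Finset.mem_insert.mp hi with rfl | hi
            · exact hzV
            · exact hSV (hI''S i hi)
          · intro i hi
            rcases Finset.mem_insert.mp hi with rfl | hi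
            · exact hzK
            · intro hiK
              exact hIK'' i hi (Finset.mem_inter.mpr ⟨hiK, hI''S i hi⟩)
          · intro a ha b hb hadj
            rcases Finset.mem_insert.mp ha with ha1 | ha2
            · subst ha1
              rcases Finset.mem_insert.mp hb with hb1 | hb2
              · subst hb1; exact hadj.ne rfl
              · exact (Finset.mem_sdiff.mp (hI''S b hb2)).2 hadj.mem_qfN
            · rcases Finset.mem_insert.mp hb with hb1 | hb2
              · subst hb1
                exact (Finset.mem_sdiff.mp (hI''S a ha2)).2 hadj.symm.mem_qfN
              · exact hIind'' a ha2 b hb2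
                  (qfAdj_qfR.mpr ⟨hadj, hI''S a ha2, hI''S b hb2⟩)
          · intro w hw
            by_cases hwS : w ∈ S
            · obtain ⟨a, haI, hadj⟩ := hIdom'' w (Finset.mem_inter.mpr ⟨hw, hwS⟩)
              exact ⟨a, Finset.mem_insert_of_mem haI, qfAdj_of_qfR hadj⟩
            · have hwN : w ∈ qfN F p₀ := by
                by_contra hcon
                exact hwS (Finset.mem_sdiff.mpr ⟨hKV hw, hcon⟩)
              have hwz : w ≠ p₀ := fun h => hzK (h ▸ hw)
              exact ⟨p₀, Finset.mem_insert_self _ _, adj_of_mem_qfN hwN hwz⟩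

end QF4
section QF5

variable {n : ℕ}

/-- The master theorem, hard direction: a well-covered presented chordal graph admits a
partition into simplicial cliques. -/
lemma qf_master : ∀ (N : ℕ) {m : ℕ} (F : Fin (m + 1) → Finset (Fin n)),
    (qfV F).card ≤ N → qfLf F → qfWC F → ∃ T, qfPart F T := by
  intro N
  induction N with
  | zero =>
    intro m F hc _ _
    have hV : qfV F = ∅ := Finset.card_eq_zero.mp (Nat.le_zero.mp hc)
    exact ⟨∅, by simp, by simp, by rw [hV]; intro v hv; simp at hv⟩
  | succ N ih =>
    intro m F hc hl hw
    rcases Finset.eq_empty_or_nonempty (qfV F) with hV | hVne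
    · exact ⟨∅, by simp, by simp, by rw [hV]; intro v hv; simp at hv⟩
    obtain ⟨x₀, hx₀⟩ := qf_exists_simp F hl hVne
    set Sv := (qfV F).filter (fun x => qfSimp F x) with hSv
    have hSvSimp : ∀ x ∈ Sv, qfSimp F x := fun x hx => (Finset.mem_filter.mp hx).2
    have hSvne : Sv.Nonempty := ⟨x₀, Finset.mem_filter.mpr ⟨hx₀.1, hx₀⟩⟩
    set Cc := Sv.image (qfN F) with hCc
    have hrep : ∀ C ∈ Cc, ∃ x, x ∈ Sv ∧ qfN F x = C := by
      intro C hC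
      obtain ⟨x, hx, hxC⟩ := Finset.mem_image.mp hC
      exact ⟨x, hx, hxC⟩
    choose rep hrep1 hrep2 using hrep
    set Xs := Cc.attach.image (fun p => rep p.1 p.2) with hXs
    have hXsmem : ∀ x ∈ Xs, ∃ (C : Finset (Fin n)) (hC : C ∈ Cc), rep C hC = x := by
      intro x hx
      obtain ⟨p, -, hpx⟩ := Finset.mem_image.mp hx
      exact ⟨p.1, p.2, hpx⟩
    have hrepXs : ∀ (C : Finset (Fin n)) (hC : C ∈ Cc), rep C hC ∈ Xs := by
      intro C hC
      exact Finset.mem_image.mpr ⟨⟨C, hC⟩, Finset.mem_attach _ _, rfl⟩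
    have hXsSv : ∀ x ∈ Xs, x ∈ Sv := by
      intro x hx
      obtain ⟨C, hC, hCx⟩ := hXsmem x hx
      exact hCx ▸ hrep1 C hC
    have hXsSimp : ∀ x ∈ Xs, qfSimp F x := fun x hx => hSvSimp x (hXsSv x hx)
    have hXsNCc : ∀ x ∈ Xs, qfN F x ∈ Cc ∧ ∀ (h : qfN F x ∈ Cc), rep (qfN F x) h = x := by
      intro x hx
      obtain ⟨C, hC, hCx⟩ := hXsmem x hx
      have hCN : qfN F x = C := by rw [← hCx]; exact hrep2 C hC
      subst hCN
      exact ⟨hC, fun h => by rw [Subsingleton.elim h hC]; exact hCx⟩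
    have hXseq : ∀ x ∈ Xs, ∀ y ∈ Xs, qfN F x = qfN F y → x = y := by
      intro x hx y hy hN
      obtain ⟨hCx, hx'⟩ := hXsNCc x hx
      obtain ⟨hCy, hy'⟩ := hXsNCc y hy
      rw [← hx' hCx, ← hy' hCy]
      congr 1
    have hXscard : Xs.card = Cc.card := by
      rw [hXs, Finset.card_image_of_injOn, Finset.card_attach]
      intro p _ q _ hpq
      have hpq' : rep p.1 p.2 = rep q.1 q.2 := hpq
      have h1 : qfN F (rep p.1 p.2) = p.1 := hrep2 p.1 p.2
      have h2 : qfN F (rep q.1 q.2) = q.1 := hrep2 q.1 q.2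
      have : p.1 = q.1 := by rw [← h1, ← h2, hpq']
      exact Subtype.ext this
    set U := Sv.biUnion (qfN F) with hU
    have hUV : U ⊆ qfV F := by
      intro u hu
      obtain ⟨x, -, hux⟩ := Finset.mem_biUnion.mp hu
      exact qfN_subset_qfV hux
    have hXsU : ∀ x ∈ Xs, x ∈ U := by
      intro x hx
      exact Finset.mem_biUnion.mpr ⟨x, hXsSv x hx, self_mem_qfN (hXsSimp x hx).1⟩
    have hUXs : ∀ u ∈ U, ∃ x ∈ Xs, u ∈ qfN F x := by
      intro u hu
      obtain ⟨x₁, hx₁Sv, hux₁⟩ := Finset.mem_biUnion.mp hu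
      have hC : qfN F x₁ ∈ Cc := Finset.mem_image.mpr ⟨x₁, hx₁Sv, rfl⟩
      refine ⟨rep (qfN F x₁) hC, hrepXs _ hC, ?_⟩
      rw [hrep2 (qfN F x₁) hC]
      exact hux₁
    have hXsind : qfInd F Xs := by
      intro x hx y hy hadj
      have := qf_sc0 (hXsSimp x hx) (hXsSimp y hy) hadj
      exact hadj.ne (hXseq x hx y hy this)
    set B := qfV F \ U with hB
    by_cases hBe : B = ∅
    · refine ⟨Xs, hXsSimp, ?_, ?_⟩
      · intro x hx y hy hxy
        refine qf_sc1 hw (hXsSimp x hx) (hXsSimp y hy) ?_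
        intro hN
        exact hxy (hXseq x hx y hy hN)
      · intro v hv
        have hvU : v ∈ U := by
          by_contra hcon
          have : v ∈ B := Finset.mem_sdiff.mpr ⟨hv, hcon⟩
          rw [hBe] at this
          exact absurd this (Finset.notMem_empty v)
        obtain ⟨x, hxXs, hvx⟩ := hUXs v hvU
        exact ⟨x, hxXs, hvx⟩
    · -- B ≠ ∅ : derive a contradiction
      exfalso
      have hBV : B ⊆ qfV F := Finset.sdiff_subset
      set FB := qfR F B with hFB
      have hVFB : qfV FB = B := qfV_qfR_of_subset hBV
      have hXsV : Xs ⊆ qfV F := fun x hx => hUV (hXsU x hx)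
      have hNU : ∀ x ∈ Xs, qfN F x ⊆ U := by
        intro x hx u hu
        exact Finset.mem_biUnion.mpr ⟨x, hXsSv x hx, hu⟩
      have hlift : ∀ A, qfMax FB A → qfMax F (Xs ∪ A) ∧ Disjoint Xs A := by
        intro A hA
        have hAB : A ⊆ B := by
          intro a ha; rw [← hVFB]; exact hA.1 ha
        have hdisj : Disjoint Xs A := by
          rw [Finset.disjoint_left]
          intro x hx hxA
          exact (Finset.mem_sdiff.mp (hAB hxA)).2 (hXsU x hx)
        refine ⟨⟨?_, ?_, ?_⟩, hdisj⟩
        · intro a ha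
          rcases Finset.mem_union.mp ha with ha | ha
          · exact hXsV ha
          · exact hBV (hAB ha)
        · intro p hp q hq hadj
          rcases Finset.mem_union.mp hp with hp | hp <;>
            rcases Finset.mem_union.mp hq with hq | hq
          · exact hXsind p hp q hq hadj
          · exact (Finset.mem_sdiff.mp (hAB hq)).2 (hNU p hp hadj.mem_qfN)
          · exact (Finset.mem_sdiff.mp (hAB hp)).2 (hNU q hq hadj.symm.mem_qfN)
          · exact hA.2.1 p hp q hq (qfAdj_qfR.mpr ⟨hadj, hAB hp, hAB hq⟩)
        · intro v hv hvA
          by_cases hvU : v ∈ U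
          · obtain ⟨x, hxXs, hvx⟩ := hUXs v hvU
            have hvnex : v ≠ x := by
              rintro rfl
              exact hvA (Finset.mem_union_left _ hxXs)
            exact ⟨x, Finset.mem_union_left _ hxXs, adj_of_mem_qfN hvx hvnex⟩
          · have hvB : v ∈ B := Finset.mem_sdiff.mpr ⟨hv, hvU⟩
            have hvA' : v ∉ A := fun h => hvA (Finset.mem_union_right _ h)
            obtain ⟨a, haA, hadj⟩ := hA.2.2 v (by rw [hVFB]; exact hvB) hvA'
            exact ⟨a, Finset.mem_union_right _ haA, qfAdj_of_qfR hadj⟩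
      have hWCB : qfWC FB := by
        intro A A' hA hA'
        have h1 := hlift A hA
        have h2 := hlift A' hA'
        have := hw _ _ h1.1 h2.1
        rw [Finset.card_union_of_disjoint h1.2, Finset.card_union_of_disjoint h2.2] at this
        omega
      have hcardB : (qfV FB).card ≤ N := by
        rw [hVFB]
        have hss : B ⊂ qfV F := by
          refine (Finset.ssubset_iff_of_subset hBV).mpr ⟨x₀, hx₀.1, ?_⟩
          intro hmem
          exact (Finset.mem_sdiff.mp hmem).2
            (Finset.mem_biUnion.mpr ⟨x₀, Finset.mem_filter.mpr ⟨hx₀.1, hx₀⟩,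
              self_mem_qfN hx₀.1⟩)
        have := Finset.card_lt_card hss
        omega
      obtain ⟨TB, hTBpart⟩ := ih FB hcardB (qfLf_qfR hl) hWCB
      obtain ⟨b₀, hb₀⟩ := Finset.nonempty_iff_ne_empty.mpr hBe
      obtain ⟨y₁, hy₁TB, -⟩ := hTBpart.2.2 b₀ (by rw [hVFB]; exact hb₀)
      set K₁ := qfN FB y₁ with hK₁
      have hK₁B : K₁ ⊆ B := by
        intro k hk
        rw [← hVFB]
        exact qfN_subset_qfV hk
      have hK₁clqF : ∀ p ∈ K₁, ∀ q ∈ K₁, p ≠ q → qfAdj F p q := by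
        intro p hp q hq hpq
        exact qfAdj_of_qfR ((hTBpart.1 y₁ hy₁TB).2 p hp q hq hpq)
      have hout : ∀ w ∈ K₁, ∃ p, p ∈ qfV F ∧ p ∉ K₁ ∧ qfAdj F p w := by
        intro w hw
        have hwB : w ∈ B := hK₁B hw
        have hwV : w ∈ qfV F := hBV hwB
        by_contra hcon
        push_neg at hcon
        have hNsub : qfN F w ⊆ K₁ := by
          intro y hy
          rcases mem_qfN.mp hy with ⟨hyV, rfl | hadj⟩
          · exact hw
          · by_contra hyK
            exact hcon y hyV hyK hadj.symm
        have hwSimp : qfSimp F w := by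
          refine ⟨hwV, fun p hp q hq hpq => ?_⟩
          exact hK₁clqF p (hNsub hp) q (hNsub hq) hpq
        exact (Finset.mem_sdiff.mp hwB).2
          (Finset.mem_biUnion.mpr ⟨w, Finset.mem_filter.mpr ⟨hwV, hwSimp⟩,
            self_mem_qfN hwV⟩)
      obtain ⟨I, hIV, hIK, hIind, hIdom⟩ := qf_claimD (qfV F).card F K₁ le_rfl hl
        (fun k hk => hBV (hK₁B hk)) hK₁clqF hout
      obtain ⟨A₁, hIA₁, hA₁max⟩ := qf_extend hIind hIV
      have hA₁K₁ : ∀ a ∈ A₁, a ∉ K₁ := by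
        intro a ha haK
        obtain ⟨i, hiI, hadj⟩ := hIdom a haK
        exact hA₁max.2.1 i (hIA₁ hiI) a ha hadj
      obtain ⟨M₀, -, hM₀max⟩ := qf_extend (F := FB) (A₀ := ∅)
        (by intro x hx; simp at hx) (by simp)
      have hM₀card : M₀.card = TB.card := qf_part_card hTBpart hM₀max
      have hliftM := hlift M₀ hM₀max
      have hα : A₁.card = Xs.card + TB.card := by
        have := hw A₁ (Xs ∪ M₀) hA₁max hliftM.1
        rw [Finset.card_union_of_disjoint hliftM.2, hM₀card] at this
        exact this
      -- upper bound on |A₁|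
      have hcap1 : ∀ C ∈ Cc, (A₁ ∩ C).card ≤ 1 := by
        intro C hC
        rw [Finset.card_le_one]
        intro p hp q hq
        by_contra hpq
        obtain ⟨x, hxSv, hxC⟩ := Finset.mem_image.mp hC
        obtain ⟨hpA, hpC⟩ := Finset.mem_inter.mp hp
        obtain ⟨hqA, hqC⟩ := Finset.mem_inter.mp hq
        rw [← hxC] at hpC hqC
        exact hA₁max.2.1 p hpA q hqA ((hSvSimp x hxSv).2 p hpC q hqC hpq)
      have hAU : (A₁ ∩ U).card ≤ Cc.card := by
        have hsub : A₁ ∩ U ⊆ Cc.biUnion (fun C => A₁ ∩ C) := by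
          intro u hu
          obtain ⟨huA, huU⟩ := Finset.mem_inter.mp hu
          obtain ⟨x₁, hx₁Sv, hux₁⟩ := Finset.mem_biUnion.mp huU
          exact Finset.mem_biUnion.mpr ⟨qfN F x₁, Finset.mem_image.mpr ⟨x₁, hx₁Sv, rfl⟩,
            Finset.mem_inter.mpr ⟨huA, hux₁⟩⟩
        calc (A₁ ∩ U).card ≤ (Cc.biUnion (fun C => A₁ ∩ C)).card :=
              Finset.card_le_card hsub
          _ ≤ ∑ C ∈ Cc, (A₁ ∩ C).card := Finset.card_biUnion_le
          _ ≤ ∑ _C ∈ Cc, 1 := Finset.sum_le_sum hcap1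
          _ = Cc.card := by simp
      have hcap2 : ∀ y ∈ TB, (A₁ ∩ qfN FB y).card ≤ 1 := by
        intro y hy
        rw [Finset.card_le_one]
        intro p hp q hq
        by_contra hpq
        obtain ⟨hpA, hpN⟩ := Finset.mem_inter.mp hp
        obtain ⟨hqA, hqN⟩ := Finset.mem_inter.mp hq
        exact hA₁max.2.1 p hpA q hqA
          (qfAdj_of_qfR ((hTBpart.1 y hy).2 p hpN q hqN hpq))
      have hAB2 : (A₁ ∩ B).card ≤ TB.card - 1 := by
        have hsub : A₁ ∩ B ⊆ (TB.erase y₁).biUnion (fun y => A₁ ∩ qfN FB y) := by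
          intro b hb
          obtain ⟨hbA, hbB⟩ := Finset.mem_inter.mp hb
          obtain ⟨y, hyTB, hby⟩ := hTBpart.2.2 b (by rw [hVFB]; exact hbB)
          have hyne : y ≠ y₁ := by
            rintro rfl
            exact hA₁K₁ b hbA hby
          exact Finset.mem_biUnion.mpr ⟨y, Finset.mem_erase.mpr ⟨hyne, hyTB⟩,
            Finset.mem_inter.mpr ⟨hbA, hby⟩⟩
        calc (A₁ ∩ B).card ≤ ((TB.erase y₁).biUnion (fun y => A₁ ∩ qfN FB y)).card :=
              Finset.card_le_card hsub
          _ ≤ ∑ y ∈ TB.erase y₁, (A₁ ∩ qfN FB y).card := Finset.card_biUnion_le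
          _ ≤ ∑ _y ∈ TB.erase y₁, 1 :=
              Finset.sum_le_sum (fun y hy => hcap2 y (Finset.mem_of_mem_erase hy))
          _ = (TB.erase y₁).card := by simp
          _ = TB.card - 1 := Finset.card_erase_of_mem hy₁TB
      have hsplit : A₁.card ≤ (A₁ ∩ U).card + (A₁ ∩ B).card := by
        have hsub : A₁ ⊆ (A₁ ∩ U) ∪ (A₁ ∩ B) := by
          intro a ha
          by_cases haU : a ∈ U
          · exact Finset.mem_union_left _ (Finset.mem_inter.mpr ⟨ha, haU⟩)
          · exact Finset.mem_union_right _ (Finset.mem_inter.mpr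
              ⟨ha, Finset.mem_sdiff.mpr ⟨hA₁max.1 ha, haU⟩⟩)
        calc A₁.card ≤ ((A₁ ∩ U) ∪ (A₁ ∩ B)).card := Finset.card_le_card hsub
          _ ≤ (A₁ ∩ U).card + (A₁ ∩ B).card := Finset.card_union_le _ _
      have hTBpos : 1 ≤ TB.card := Finset.card_pos.mpr ⟨y₁, hy₁TB⟩
      omega

end QF5
section QF6

variable {n m : ℕ}

lemma qfV_eq_univ {F : Fin (m + 1) → Finset (Fin n)} (hvert : ∀ x : Fin n, ∃ i, x ∈ F i) :
    qfV F = Finset.univ := by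
  apply Finset.eq_univ_of_forall
  intro x
  obtain ⟨i, hi⟩ := hvert x
  exact mem_qfV_of_mem hi

lemma isVC_iff_ind {F : Fin (m + 1) → Finset (Fin n)} {C : Finset (Fin n)} :
    IsVC F C ↔ qfInd F Cᶜ := by
  constructor
  · rintro h x hx y hy ⟨hne, k, hxk, hyk⟩
    rcases h x y k hne hxk hyk with hC | hC
    · exact (Finset.mem_compl.mp hx) hC
    · exact (Finset.mem_compl.mp hy) hC
  · intro h i j k hne hik hjk
    by_contra hcon
    push_neg at hcon
    exact h i (Finset.mem_compl.mpr hcon.1) j (Finset.mem_compl.mpr hcon.2)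
      ⟨hne, k, hik, hjk⟩

lemma qfMax_compl_of_minVC {F : Fin (m + 1) → Finset (Fin n)}
    (hvert : ∀ x : Fin n, ∃ i, x ∈ F i) {C : Finset (Fin n)} (h : IsMinVC F C) :
    qfMax F Cᶜ := by
  obtain ⟨hvc, hmin⟩ := h
  refine ⟨by rw [qfV_eq_univ hvert]; exact Finset.subset_univ _,
    isVC_iff_ind.mp hvc, ?_⟩
  intro v _ hv
  have hvC : v ∈ C := by simpa using hv
  have hne : C.erase v ≠ C := by
    intro h
    apply Finset.notMem_erase v C
    rw [h]
    exact hvC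
  have hnvc : ¬ IsVC F (C.erase v) := by
    intro hvc'
    exact hne (hmin _ (Finset.erase_subset _ _) hvc')
  rw [IsVC] at hnvc
  push_neg at hnvc
  obtain ⟨i, j, k, hij, hik, hjk, hiC, hjC⟩ := hnvc
  rcases hvc i j k hij hik hjk with hC | hC
  · have hiv : i = v := by
      by_contra hcon
      exact hiC (Finset.mem_erase.mpr ⟨hcon, hC⟩)
    subst hiv
    have hjC' : j ∉ C := by
      intro hcon
      exact hjC (Finset.mem_erase.mpr ⟨fun h => hij h.symm, hcon⟩)
    exact ⟨j, Finset.mem_compl.mpr hjC', ⟨fun h => hij h.symm, k, hjk, hik⟩⟩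
  · have hjv : j = v := by
      by_contra hcon
      exact hjC (Finset.mem_erase.mpr ⟨hcon, hC⟩)
    subst hjv
    have hiC' : i ∉ C := by
      intro hcon
      exact hiC (Finset.mem_erase.mpr ⟨hij, hcon⟩)
    exact ⟨i, Finset.mem_compl.mpr hiC', ⟨hij, k, hik, hjk⟩⟩

lemma minVC_compl_of_qfMax {F : Fin (m + 1) → Finset (Fin n)}
    (hvert : ∀ x : Fin n, ∃ i, x ∈ F i) {A : Finset (Fin n)} (h : qfMax F A) :
    IsMinVC F Aᶜ := by
  refine ⟨isVC_iff_ind.mpr (by rw [compl_compl]; exact h.2.1), ?_⟩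
  intro C' hC' hvc'
  apply Finset.Subset.antisymm hC'
  intro c hc
  by_contra hcC'
  have hcA : c ∉ A := by simpa using hc
  obtain ⟨a, haA, hadj⟩ := h.2.2 c (by rw [qfV_eq_univ hvert]; exact Finset.mem_univ c) hcA
  obtain ⟨hne, k, hak, hck⟩ := hadj
  rcases hvc' a c k hne hak hck with hC | hC
  · exact (Finset.mem_compl.mp (hC' hC)) haA
  · exact hcC' hC

theorem stmt10' {n m : ℕ} (F : Fin (m + 1) → Finset (Fin n))
    (hfac : ∀ i j, i ≠ j → ¬ F i ⊆ F j)
    (hleaf : ∀ i : Fin (m + 1), 0 < (i : ℕ) →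
      ∃ t, t < i ∧ ∀ j, j < i → F j ∩ F i ⊆ F t)
    (hvert : ∀ x : Fin n, ∃ i, x ∈ F i) :
    (∀ C C' : Finset (Fin n), IsMinVC F C → IsMinVC F C' → C.card = C'.card) ↔
    (∃ S : Finset (Fin (m + 1)),
      (S : Set (Fin (m + 1))).PairwiseDisjoint F ∧
      (∀ x : Fin n, ∃ i ∈ S, x ∈ F i) ∧
      ∀ i ∈ S, ∃ x ∈ F i, ∀ j, j ≠ i → x ∉ F j) := by
  have hlf : qfLf F := hleaf
  have hcompl_card : ∀ A : Finset (Fin n), Aᶜ.card = n - A.card := by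
    intro A
    rw [Finset.card_compl, Fintype.card_fin]
  have hcard_le : ∀ A : Finset (Fin n), A.card ≤ n := by
    intro A
    have := Finset.card_le_card (Finset.subset_univ A)
    simpa using this
  constructor
  · intro hLHS
    have hWC : qfWC F := by
      intro A A' hA hA'
      have := hLHS Aᶜ A'ᶜ (minVC_compl_of_qfMax hvert hA) (minVC_compl_of_qfMax hvert hA')
      rw [hcompl_card, hcompl_card] at this
      have h1 := hcard_le A
      have h2 := hcard_le A'
      omega
    obtain ⟨T, hPart⟩ := qf_master (qfV F).card F le_rfl hlf hWC
    have hfacet : ∀ x ∈ T, ∃ k, F k = qfN F x := by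
      intro x hxT
      have hS := hPart.1 x hxT
      obtain ⟨k, hk⟩ := qf_flag F hlf (qfN F x) qfN_subset_qfV hS.2
      have hxk : x ∈ F k := hk (self_mem_qfN hS.1)
      exact ⟨k, Finset.Subset.antisymm (facet_subset_qfN hxk) hk⟩
    refine ⟨Finset.univ.filter (fun i => ∃ x ∈ T, F i = qfN F x), ?_, ?_, ?_⟩
    · intro i hi j hj hij
      simp only [Finset.coe_filter, Set.mem_setOf_eq] at hi hj
      obtain ⟨-, x, hxT, hFi⟩ := hi
      obtain ⟨-, y, hyT, hFj⟩ := hj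
      have hxy : x ≠ y := by
        rintro rfl
        exact hfac i j hij (by rw [hFi, hFj])
      have := hPart.2.1 x hxT y hyT hxy
      show Disjoint (F i) (F j)
      rw [hFi, hFj]
      exact this
    · intro v
      have hv : v ∈ qfV F := by rw [qfV_eq_univ hvert]; exact Finset.mem_univ v
      obtain ⟨x, hxT, hvx⟩ := hPart.2.2 v hv
      obtain ⟨k, hk⟩ := hfacet x hxT
      exact ⟨k, Finset.mem_filter.mpr ⟨Finset.mem_univ k, x, hxT, hk⟩, by rw [hk]; exact hvx⟩
    · intro i hi
      obtain ⟨-, x, hxT, hFi⟩ := Finset.mem_filter.mp hi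
      refine ⟨x, by rw [hFi]; exact self_mem_qfN (hPart.1 x hxT).1, ?_⟩
      intro j hj hxj
      have hsub : F j ⊆ qfN F x := facet_subset_qfN hxj
      rw [← hFi] at hsub
      exact hfac j i hj hsub
  · rintro ⟨S, hdisj, hcov, hfree⟩
    have hchoice : ∀ i ∈ S, ∃ x, x ∈ F i ∧ ∀ j, j ≠ i → x ∉ F j := by
      intro i hi
      obtain ⟨x, hx1, hx2⟩ := hfree i hi
      exact ⟨x, hx1, hx2⟩
    choose xi hxi1 hxi2 using hchoice
    have hN : ∀ (i : Fin (m + 1)) (hi : i ∈ S), qfN F (xi i hi) = F i := by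
      intro i hi
      apply Finset.Subset.antisymm
      · intro y hy
        rcases mem_qfN.mp hy with ⟨-, rfl | hadj⟩
        · exact hxi1 i hi
        · obtain ⟨-, k, hxk, hyk⟩ := hadj
          have hki : k = i := by
            by_contra hcon
            exact hxi2 i hi k hcon hxk
          exact hki ▸ hyk
      · exact facet_subset_qfN (hxi1 i hi)
    have hSimp : ∀ (i : Fin (m + 1)) (hi : i ∈ S), qfSimp F (xi i hi) := by
      intro i hi
      refine ⟨mem_qfV_of_mem (hxi1 i hi), ?_⟩
      intro p hp q hq hpq
      rw [hN i hi] at hp hq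
      exact ⟨hpq, i, hp, hq⟩
    set T := S.attach.image (fun p => xi p.1 p.2) with hT
    have hTmem : ∀ x ∈ T, ∃ (i : Fin (m + 1)) (hi : i ∈ S), xi i hi = x := by
      intro x hx
      obtain ⟨p, -, hpx⟩ := Finset.mem_image.mp hx
      exact ⟨p.1, p.2, hpx⟩
    have hPart : qfPart F T := by
      refine ⟨?_, ?_, ?_⟩
      · intro x hx
        obtain ⟨i, hi, hix⟩ := hTmem x hx
        exact hix ▸ hSimp i hi
      · intro x hx y hy hxy
        obtain ⟨i, hi, hix⟩ := hTmem x hx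
        obtain ⟨j, hj, hjy⟩ := hTmem y hy
        have hij : i ≠ j := by
          rintro rfl
          exact hxy (by rw [← hix, ← hjy])
        have := hdisj (Finset.mem_coe.mpr hi) (Finset.mem_coe.mpr hj) hij
        rw [← hix, ← hjy, hN i hi, hN j hj]
        exact this
      · intro v _
        obtain ⟨i, hiS, hvi⟩ := hcov v
        refine ⟨xi i hiS, Finset.mem_image.mpr ⟨⟨i, hiS⟩, Finset.mem_attach _ _, rfl⟩, ?_⟩
        rw [hN i hiS]
        exact hvi
    intro C C' hC hC'
    have hA := qfMax_compl_of_minVC hvert hC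
    have hA' := qfMax_compl_of_minVC hvert hC'
    have h1 := qf_part_card hPart hA
    have h2 := qf_part_card hPart hA'
    rw [hcompl_card] at h1 h2
    have h3 := hcard_le C
    have h4 := hcard_le C'
    omega

end QF6

theorem stmt10 {n m : ℕ} (F : Fin (m + 1) → Finset (Fin n))
    (hfac : ∀ i j, i ≠ j → ¬ F i ⊆ F j)
    (hleaf : ∀ i : Fin (m + 1), 0 < (i : ℕ) →
      ∃ t, t < i ∧ ∀ j, j < i → F j ∩ F i ⊆ F t)
    (hvert : ∀ x : Fin n, ∃ i, x ∈ F i) :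
    (∀ C C' : Finset (Fin n), IsMinVC F C → IsMinVC F C' → C.card = C'.card) ↔
    (∃ S : Finset (Fin (m + 1)),
      (S : Set (Fin (m + 1))).PairwiseDisjoint F ∧
      (∀ x : Fin n, ∃ i ∈ S, x ∈ F i) ∧
      ∀ i ∈ S, ∃ x ∈ F i, ∀ j, j ≠ i → x ∉ F j) := by
  exact stmt10' F hfac hleaf hvert
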